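/- For every ε > 0 there exists Q₀ such that for all real Q ≥ Q₀ and every nonempty finite set A of positive integers contained in [1, Q], the quotient set A/A satisfies |A/A| ≥ |A|²·exp((−2·log 2 − ε)·(log Q)/(log log Q)). -/

import Mathlib

open Finset

section QuotientSetAux
open Real Filter

lemma d_le (n : ℕ) (hn : 2 ≤ n) (y : ℝ) (hy : Real.exp 1 ≤ y) :
    (n.divisors.card : ℝ) ≤
      (1 + Real.log n / Real.log 2) ^ y * (n : ℝ) ^ (Real.log 2 / Real.log y) := by
  have hn0 : n ≠ 0 := by omega
  have h1y : (1:ℝ) < y := lt_of_lt_of_le (by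
    calc (1:ℝ) < Real.exp 1 := by
          simpa using Real.one_lt_exp_iff.mpr one_pos) hy
  have hy0 : (0:ℝ) < y := by linarith
  have hlogy : (1:ℝ) ≤ Real.log y := by
    rw [← Real.log_exp 1]
    exact Real.log_le_log (Real.exp_pos 1) hy
  have hlogy0 : (0:ℝ) < Real.log y := by linarith
  have hlog2 : (0:ℝ) < Real.log 2 := Real.log_pos (by norm_num)
  have hlogn : Real.log 2 ≤ Real.log n := Real.log_le_log (by norm_num) (by exact_mod_cast hn)
  have hB : (1:ℝ) ≤ 1 + Real.log n / Real.log 2 := by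
    have : 0 ≤ Real.log n / Real.log 2 := div_nonneg (by linarith) hlog2.le
    linarith
  -- the formula
  rw [Nat.card_divisors hn0]
  set P := n.primeFactors with hP
  have hsplit := Finset.prod_filter_mul_prod_filter_not P (fun p : ℕ => (p:ℝ) ≤ y)
      (fun p => n.factorization p + 1)
  set Ps := P.filter (fun p : ℕ => (p:ℝ) ≤ y) with hPs
  set Pl := P.filter (fun p : ℕ => ¬ (p:ℝ) ≤ y) with hPl
  push_cast [← hsplit]
  -- small primes part
  have hsmall : (∏ p ∈ Ps, ((n.factorization p : ℝ) + 1)) ≤ (1 + Real.log n / Real.log 2) ^ y := by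
    have hterm : ∀ p ∈ Ps, ((n.factorization p : ℝ) + 1) ≤ 1 + Real.log n / Real.log 2 := by
      intro p hp
      have hpP : p ∈ P := Finset.mem_of_mem_filter p hp
      have hpprime : p.Prime := Nat.prime_of_mem_primeFactors hpP
      have hdvd : p ^ n.factorization p ∣ n := Nat.ordProj_dvd n p
      have hle : (2:ℕ) ^ n.factorization p ≤ n :=
        le_trans (Nat.pow_le_pow_left hpprime.two_le _) (Nat.le_of_dvd (by omega) hdvd)
      have : (n.factorization p : ℝ) * Real.log 2 ≤ Real.log n := by
        have := Real.log_le_log (by positivity) (show ((2:ℕ)^n.factorization p : ℝ) ≤ n by exact_mod_cast hle)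
        rw [Real.log_pow, Nat.cast_ofNat] at this
        linarith
      have : (n.factorization p : ℝ) ≤ Real.log n / Real.log 2 :=
        (le_div_iff₀ hlog2).mpr this
      linarith
    calc (∏ p ∈ Ps, ((n.factorization p : ℝ) + 1))
        ≤ ∏ p ∈ Ps, (1 + Real.log n / Real.log 2) := by
          apply Finset.prod_le_prod (fun p _ => by positivity) hterm
      _ = (1 + Real.log n / Real.log 2) ^ (Ps.card) := by rw [Finset.prod_const]
      _ ≤ (1 + Real.log n / Real.log 2) ^ y := by
          rw [← Real.rpow_natCast]
          apply Real.rpow_le_rpow_of_exponent_le hB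
          -- card Ps ≤ y
          have hsub : Ps ⊆ Finset.Icc 1 ⌊y⌋₊ := by
            intro p hp
            rw [Finset.mem_Icc]
            have hpy : (p:ℝ) ≤ y := (Finset.mem_filter.mp hp).2
            have hpP : p ∈ P := Finset.mem_of_mem_filter p hp
            exact ⟨(Nat.prime_of_mem_primeFactors hpP).one_lt.le, Nat.le_floor hpy⟩
          have := Finset.card_le_card hsub
          rw [Nat.card_Icc] at this
          calc (Ps.card : ℝ) ≤ ((⌊y⌋₊ + 1 - 1 : ℕ) : ℝ) := by exact_mod_cast this
            _ ≤ y := by simpa using Nat.floor_le hy0.le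
  -- large primes part
  have hlarge : (∏ p ∈ Pl, ((n.factorization p : ℝ) + 1)) ≤ (n:ℝ) ^ (Real.log 2 / Real.log y) := by
    have hterm : ∀ p ∈ Pl, ((n.factorization p : ℝ) + 1) ≤
        ((p:ℝ) ^ n.factorization p) ^ (Real.log 2 / Real.log y) := by
      intro p hp
      have hpy : y < (p:ℝ) := by
        have := (Finset.mem_filter.mp hp).2; push_neg at this; exact this
      have hp1 : (1:ℝ) < p := lt_trans h1y hpy
      have hlogp : Real.log y ≤ Real.log p := Real.log_le_log hy0 hpy.le
      set k := n.factorization p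
      have h2k : ((k:ℝ) + 1) ≤ (2:ℝ) ^ (k:ℕ) := by
        exact_mod_cast Nat.succ_le_of_lt (Nat.lt_two_pow_self (n := k))
      calc ((k:ℝ) + 1) ≤ (2:ℝ) ^ (k:ℕ) := h2k
        _ = Real.exp ((k:ℝ) * Real.log 2) := by
            rw [← Real.exp_log (show (0:ℝ) < 2^(k:ℕ) by positivity), Real.log_pow]
        _ ≤ Real.exp ((k:ℝ) * Real.log p * (Real.log 2 / Real.log y)) := by
            apply Real.exp_le_exp.mpr
            have h1 : (1:ℝ) ≤ Real.log p / Real.log y := (one_le_div hlogy0).mpr hlogp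
            have heq : (k:ℝ) * Real.log p * (Real.log 2 / Real.log y)
                = (k:ℝ) * Real.log 2 * (Real.log p / Real.log y) := by ring
            rw [heq]
            nlinarith [mul_nonneg (Nat.cast_nonneg k) hlog2.le]
        _ = ((p:ℝ) ^ k) ^ (Real.log 2 / Real.log y) := by
            rw [← Real.log_pow, Real.rpow_def_of_pos (by positivity)]
    calc (∏ p ∈ Pl, ((n.factorization p : ℝ) + 1))
        ≤ ∏ p ∈ Pl, ((p:ℝ) ^ n.factorization p) ^ (Real.log 2 / Real.log y) := by
          apply Finset.prod_le_prod (fun p _ => by positivity) hterm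
      _ = (∏ p ∈ Pl, ((p:ℝ) ^ n.factorization p)) ^ (Real.log 2 / Real.log y) := by
          rw [← Real.finset_prod_rpow _ _ (fun p _ => by positivity)]
      _ ≤ (n:ℝ) ^ (Real.log 2 / Real.log y) := by
          apply Real.rpow_le_rpow (Finset.prod_nonneg (fun p _ => by positivity)) _ (by positivity)
          have hdvd : (∏ p ∈ Pl, p ^ n.factorization p) ∣ n := by
            have : (∏ p ∈ Pl, p ^ n.factorization p) ∣ ∏ p ∈ P, p ^ n.factorization p :=
              Finset.prod_dvd_prod_of_subset Pl P _ (Finset.filter_subset _ _)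
            have heq : ∏ p ∈ P, p ^ n.factorization p = n := by
              rw [hP, ← Nat.support_factorization]
              exact Nat.factorization_prod_pow_eq_self hn0
            rwa [heq] at this
          have := Nat.le_of_dvd (by omega) hdvd
          push_cast
          exact_mod_cast this
  calc (∏ p ∈ Ps, ((n.factorization p:ℝ) + 1)) * ∏ p ∈ Pl, ((n.factorization p:ℝ) + 1)
      ≤ (1 + Real.log n / Real.log 2) ^ y * (n:ℝ) ^ (Real.log 2 / Real.log y) := by
        apply mul_le_mul hsmall hlarge (Finset.prod_nonneg (fun p _ => by positivity)) (by positivity)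


lemma divisor_bound (ε : ℝ) (hε : 0 < ε) : ∃ N : ℕ, ∀ n : ℕ, N ≤ n →
    (n.divisors.card : ℝ) ≤
      Real.exp ((Real.log 2 + ε) * (Real.log n / Real.log (Real.log n))) := by
  have hlog2 : (0:ℝ) < Real.log 2 := Real.log_pos (by norm_num)
  set ε2 := ε / 2 with hε2
  have hε20 : 0 < ε2 := by positivity
  set δ := ε2 / (Real.log 2 + ε2) with hδ
  have hδ0 : 0 < δ := by positivity
  have hδ1 : δ < 1 := by
    rw [hδ, div_lt_one (by positivity)]; linarith
  have h1δ : 1 - δ = Real.log 2 / (Real.log 2 + ε2) := by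
    rw [hδ]; field_simp; ring
  have h1δ0 : 0 < 1 - δ := by linarith
  -- eventual conditions on x = log n
  have hev : ∀ᶠ x : ℝ in atTop,
      Real.exp 1 ≤ x ^ (1 - δ) ∧
      x ^ (1 - δ) * Real.log (1 + x / Real.log 2) ≤ ε2 * (x / Real.log x) ∧
      1 ≤ Real.log x ∧ 0 < x := by
    have t1 : ∀ᶠ x : ℝ in atTop, Real.exp 1 ≤ x ^ (1 - δ) :=
      (tendsto_rpow_atTop h1δ0).eventually_ge_atTop _
    have t3 : ∀ᶠ x : ℝ in atTop, 1 ≤ Real.log x :=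
      Real.tendsto_log_atTop.eventually_ge_atTop 1
    have t4 : ∀ᶠ x : ℝ in atTop, (0:ℝ) < x := eventually_gt_atTop 0
    -- main eventual bound t2
    have hlo := (isLittleO_log_rpow_atTop (show 0 < δ/2 by positivity)).def
        (show (0:ℝ) < Real.sqrt (ε2/2) by positivity)
    have t2 : ∀ᶠ x : ℝ in atTop,
        x ^ (1 - δ) * Real.log (1 + x / Real.log 2) ≤ ε2 * (x / Real.log x) := by
      filter_upwards [hlo, eventually_ge_atTop (3:ℝ), t3] with x hx h3 hlx
      have hx0 : (0:ℝ) < x := by linarith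
      have hlx0 : (0:ℝ) < Real.log x := by linarith
      have hb : 1 + x / Real.log 2 ≤ x ^ 2 := by
        have h2 : (2/3:ℝ) < Real.log 2 := by
          have := Real.log_two_gt_d9; linarith
        have hq : x / Real.log 2 ≤ (3/2) * x := by
          rw [div_le_iff₀ hlog2]
          nlinarith [h2]
        nlinarith [hq, sq_nonneg (x - 3)]
      have hlb : Real.log (1 + x / Real.log 2) ≤ 2 * Real.log x := by
        calc Real.log (1 + x / Real.log 2) ≤ Real.log (x ^ 2) :=
              Real.log_le_log (by positivity) hb
          _ = 2 * Real.log x := by rw [Real.log_pow]; norm_num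
      have hx' : Real.log x ≤ Real.sqrt (ε2/2) * x ^ (δ/2) := by
        have h := hx
        rw [Real.norm_eq_abs, Real.norm_eq_abs, abs_of_nonneg hlx0.le,
          abs_of_nonneg (Real.rpow_nonneg hx0.le _)] at h
        exact h
      have hsq : (Real.log x) ^ 2 ≤ (ε2/2) * x ^ δ := by
        have hmul := mul_le_mul hx' hx' hlx0.le (by positivity)
        calc (Real.log x)^2 = Real.log x * Real.log x := by ring
          _ ≤ (Real.sqrt (ε2/2) * x ^ (δ/2)) * (Real.sqrt (ε2/2) * x ^ (δ/2)) := hmul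
          _ = (Real.sqrt (ε2/2) * Real.sqrt (ε2/2)) * (x ^ (δ/2) * x ^ (δ/2)) := by ring
          _ = (ε2/2) * x ^ δ := by
              rw [Real.mul_self_sqrt (by positivity), ← Real.rpow_add hx0]
              norm_num
      have goal2 : x ^ (1-δ) * Real.log (1 + x / Real.log 2) * Real.log x ≤ ε2 * x := by
        have hlog1 : 0 ≤ Real.log (1 + x / Real.log 2) := by
          apply Real.log_nonneg
          have : 0 ≤ x / Real.log 2 := by positivity
          linarith
        calc x ^ (1-δ) * Real.log (1 + x / Real.log 2) * Real.log x
            ≤ x ^ (1-δ) * (2 * Real.log x) * Real.log x := by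
              apply mul_le_mul_of_nonneg_right _ hlx0.le
              exact mul_le_mul_of_nonneg_left hlb (by positivity)
          _ = x ^ (1-δ) * (2 * (Real.log x)^2) := by ring
          _ ≤ x ^ (1-δ) * (2 * ((ε2/2) * x ^ δ)) := by
              apply mul_le_mul_of_nonneg_left _ (by positivity)
              linarith
          _ = ε2 * (x ^ (1-δ) * x ^ δ) := by ring
          _ = ε2 * x := by rw [← Real.rpow_add hx0]; norm_num
      have := (le_div_iff₀ hlx0).mpr goal2
      calc x ^ (1-δ) * Real.log (1 + x / Real.log 2) ≤ ε2 * x / Real.log x := this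
        _ = ε2 * (x / Real.log x) := by ring
    filter_upwards [t1, t2, t3, t4] with x h1 h2 h3 h4
    exact ⟨h1, h2, h3, h4⟩
  -- pull back to ℕ
  have hlogn : Filter.Tendsto (fun n : ℕ => Real.log n) atTop atTop :=
    Real.tendsto_log_atTop.comp tendsto_natCast_atTop_atTop
  have hevn := (hlogn.eventually hev).and (eventually_ge_atTop 2)
  rw [Filter.eventually_atTop] at hevn
  obtain ⟨N, hN⟩ := hevn
  refine ⟨N, fun n hn => ?_⟩
  obtain ⟨⟨hA, hB, hC, hD⟩, hn2⟩ := hN n hn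
  set x := Real.log n with hx
  set y := x ^ (1 - δ) with hy
  have hn0 : (0:ℝ) < n := by positivity
  have hBpos : (0:ℝ) < 1 + x / Real.log 2 := by
    have : 0 ≤ x := Real.log_natCast_nonneg n
    positivity
  have hlogy : Real.log y = (1 - δ) * Real.log x := Real.log_rpow hD (1-δ)
  have hkey := d_le n hn2 y hA
  rw [← hx] at hkey
  calc (n.divisors.card : ℝ) ≤ (1 + x / Real.log 2) ^ y * (n:ℝ) ^ (Real.log 2 / Real.log y) := hkey
    _ = Real.exp (y * Real.log (1 + x / Real.log 2) + (Real.log 2 / Real.log y) * x) := by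
        rw [Real.rpow_def_of_pos hBpos, Real.rpow_def_of_pos hn0, ← Real.exp_add, ← hx]
        ring_nf
    _ ≤ Real.exp ((Real.log 2 + ε) * (x / Real.log x)) := by
        apply Real.exp_le_exp.mpr
        have hterm2 : (Real.log 2 / Real.log y) * x = (Real.log 2 + ε2) * (x / Real.log x) := by
          rw [hlogy, h1δ]
          have hlx0 : (0:ℝ) < Real.log x := by linarith
          field_simp
        rw [hterm2]
        have : y * Real.log (1 + x / Real.log 2) ≤ ε2 * (x / Real.log x) := hB
        have hxl : 0 ≤ x / Real.log x := by
          apply div_nonneg (Real.log_natCast_nonneg n) (by linarith)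
        nlinarith [hxl]


lemma fiber_sq {α β : Type*} [DecidableEq α] [DecidableEq β] (s : Finset α) (g : α → β) :
    ∑ r ∈ s.image g, ((s.filter (fun p => g p = r)).card) ^ 2
      = ((s ×ˢ s).filter (fun x => g x.1 = g x.2)).card := by
  have hmap : ∀ x ∈ (s ×ˢ s).filter (fun x => g x.1 = g x.2), g x.1 ∈ s.image g := by
    intro x hx
    rw [Finset.mem_filter, Finset.mem_product] at hx
    exact Finset.mem_image_of_mem g hx.1.1
  rw [Finset.card_eq_sum_card_fiberwise hmap]
  apply Finset.sum_congr rfl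
  intro r _
  have : ((s ×ˢ s).filter (fun x => g x.1 = g x.2)).filter (fun x => g x.1 = r)
      = (s.filter (fun p => g p = r)) ×ˢ (s.filter (fun p => g p = r)) := by
    ext x
    rw [Finset.mem_filter, Finset.mem_filter, Finset.mem_product, Finset.mem_product,
      Finset.mem_filter, Finset.mem_filter]
    constructor
    · rintro ⟨⟨⟨h1, h2⟩, he⟩, hr⟩
      exact ⟨⟨h1, hr⟩, h2, he ▸ hr⟩
    · rintro ⟨⟨h1, hr1⟩, h2, hr2⟩
      exact ⟨⟨⟨h1, h2⟩, by rw [hr1, hr2]⟩, hr1⟩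
  rw [this, Finset.card_product, sq]

lemma comb (A : Finset ℕ) (hA : ∀ a ∈ A, 0 < a) (D : ℝ)
    (hD : ∀ m : ℕ, m ∈ (A ×ˢ A).image (fun p : ℕ × ℕ => p.1 * p.2) → (m.divisors.card : ℝ) ≤ D) :
    (A.card : ℝ) ^ 2 ≤
      (((A ×ˢ A).image (fun p : ℕ × ℕ => (p.1 : ℚ) / (p.2 : ℚ))).card : ℝ) * D := by
  rcases A.eq_empty_or_nonempty with rfl | hAne
  · simp
  set s := A ×ˢ A with hs
  set g : ℕ × ℕ → ℚ := fun p => (p.1 : ℚ) / (p.2 : ℚ) with hg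
  set h : ℕ × ℕ → ℕ := fun p => p.1 * p.2 with hh
  have hpos : ∀ p ∈ s, 0 < p.1 ∧ 0 < p.2 := by
    intro p hp
    rw [hs, Finset.mem_product] at hp
    exact ⟨hA _ hp.1, hA _ hp.2⟩
  -- Step 4 : T.card ≤ V.card
  have step4 : ((s ×ˢ s).filter (fun x => g x.1 = g x.2)).card
      ≤ ((s ×ˢ s).filter (fun x => h x.1 = h x.2)).card := by
    apply Finset.card_le_card_of_injOn
      (fun x => ((x.1.1, x.2.2), (x.2.1, x.1.2)))
    · intro x hx
      rw [Finset.mem_coe, Finset.mem_filter, Finset.mem_product] at hx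
      obtain ⟨⟨hx1, hx2⟩, he⟩ := hx
      rw [hs, Finset.mem_product] at hx1 hx2
      obtain ⟨ha, hb⟩ := hx1
      obtain ⟨hc, hd⟩ := hx2
      have hbpos : 0 < x.1.2 := hA _ hb
      have hdpos : 0 < x.2.2 := hA _ hd
      rw [Finset.mem_coe, Finset.mem_filter, Finset.mem_product]
      refine ⟨⟨?_, ?_⟩, ?_⟩
      · rw [hs, Finset.mem_product]; exact ⟨ha, hd⟩
      · rw [hs, Finset.mem_product]; exact ⟨hc, hb⟩
      · -- h (a, d) = h (c, b) from a/b = c/d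
        have he' : (x.1.1 : ℚ) / (x.1.2 : ℚ) = (x.2.1 : ℚ) / (x.2.2 : ℚ) := he
        rw [div_eq_div_iff (Nat.cast_ne_zero.mpr hbpos.ne') (Nat.cast_ne_zero.mpr hdpos.ne')] at he'
        show x.1.1 * x.2.2 = x.2.1 * x.1.2
        exact_mod_cast he'
    · intro x _ y _ hxy
      simp only [Prod.mk.injEq] at hxy
      obtain ⟨⟨h1, h2⟩, h3, h4⟩ := hxy
      ext <;> simp_all [Prod.ext_iff]
  -- Step 6: h-fibers bounded by divisor counts
  have step6 : ∀ m ∈ s.image h, ((s.filter (fun p => h p = m)).card) ≤ m.divisors.card := by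
    intro m hm
    apply Finset.card_le_card_of_injOn (fun p => p.1)
    · intro p hp
      rw [Finset.mem_coe, Finset.mem_filter] at hp
      obtain ⟨hps, hpm⟩ := hp
      obtain ⟨hp1, hp2⟩ := hpos p hps
      rw [Finset.mem_coe, Nat.mem_divisors]
      exact ⟨⟨p.2, hpm.symm⟩, by rw [← hpm]; positivity⟩
    · intro p hp q hq hpq
      simp only [Finset.mem_coe, Finset.mem_filter] at hp hq
      have h1 : p.1 * p.2 = q.1 * q.2 := hp.2.trans hq.2.symm
      have hpq' : p.1 = q.1 := hpq
      have hp1 : 0 < p.1 := (hpos p hp.1).1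
      have h2 : p.2 = q.2 := by
        apply Nat.eq_of_mul_eq_mul_left hp1
        rw [h1, ← hpq']
      exact Prod.ext hpq' h2
  -- assemble
  have hA2 : s.card = A.card * A.card := by rw [hs, Finset.card_product]
  have key : ((s.card : ℝ)) ^ 2 ≤ ((s.image g).card : ℝ) * (D * s.card) := by
    have step2 : ((s.card : ℝ)) ^ 2 ≤ ((s.image g).card : ℝ) *
        ∑ r ∈ s.image g, ((s.filter (fun p => g p = r)).card : ℝ) ^ 2 := by
      have hcs := sq_sum_le_card_mul_sum_sq (s := s.image g)
        (f := fun r => ((s.filter (fun p => g p = r)).card : ℝ))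
      calc ((s.card : ℝ)) ^ 2
          = (∑ r ∈ s.image g, ((s.filter (fun p => g p = r)).card : ℝ)) ^ 2 := by
            rw [Finset.card_eq_sum_card_image g s]; push_cast; ring
        _ ≤ _ := hcs
    have hsum : ∑ r ∈ s.image g, ((s.filter (fun p => g p = r)).card : ℝ) ^ 2 ≤ D * s.card := by
      have e1 : ∑ r ∈ s.image g, ((s.filter (fun p => g p = r)).card : ℝ) ^ 2
          = (((s ×ˢ s).filter (fun x => g x.1 = g x.2)).card : ℝ) := by
        exact_mod_cast congrArg (Nat.cast (R := ℝ)) (fiber_sq s g)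
      have e2 : ∑ m ∈ s.image h, ((s.filter (fun p => h p = m)).card : ℝ) ^ 2
          = (((s ×ˢ s).filter (fun x => h x.1 = h x.2)).card : ℝ) := by
        exact_mod_cast congrArg (Nat.cast (R := ℝ)) (fiber_sq s h)
      rw [e1]
      calc (((s ×ˢ s).filter (fun x => g x.1 = g x.2)).card : ℝ)
          ≤ (((s ×ˢ s).filter (fun x => h x.1 = h x.2)).card : ℝ) := by exact_mod_cast step4
        _ = ∑ m ∈ s.image h, ((s.filter (fun p => h p = m)).card : ℝ) ^ 2 := e2.symm
        _ ≤ ∑ m ∈ s.image h, ((s.filter (fun p => h p = m)).card : ℝ) * D := by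
            apply Finset.sum_le_sum
            intro m hm
            rw [sq]
            apply mul_le_mul_of_nonneg_left _ (Nat.cast_nonneg _)
            calc ((s.filter (fun p => h p = m)).card : ℝ) ≤ (m.divisors.card : ℝ) := by
                  exact_mod_cast step6 m hm
              _ ≤ D := hD m hm
        _ = (∑ m ∈ s.image h, ((s.filter (fun p => h p = m)).card : ℝ)) * D := by
            rw [Finset.sum_mul]
        _ = (s.card : ℝ) * D := by
            rw [Finset.card_eq_sum_card_image h s]; push_cast; ring
        _ = D * s.card := by ring
    calc ((s.card : ℝ)) ^ 2 ≤ ((s.image g).card : ℝ) *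
        ∑ r ∈ s.image g, ((s.filter (fun p => g p = r)).card : ℝ) ^ 2 := step2
      _ ≤ ((s.image g).card : ℝ) * (D * s.card) :=
          mul_le_mul_of_nonneg_left hsum (Nat.cast_nonneg _)
  -- divide by |A|^2
  have hApos : (0:ℝ) < (A.card : ℝ) := by exact_mod_cast Finset.card_pos.mpr hAne
  have hsc : (s.card : ℝ) = (A.card : ℝ) ^ 2 := by rw [hA2]; push_cast; ring
  rw [hsc] at key
  have hsq : (0:ℝ) < (A.card : ℝ) ^ 2 := by positivity
  nlinarith [key, hsq]


lemma card_div_le_self (m : ℕ) (hm : 0 < m) : m.divisors.card ≤ m := by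
  have hsub : m.divisors ⊆ Finset.Icc 1 m := by
    intro d hd
    rw [Nat.mem_divisors] at hd
    rw [Finset.mem_Icc]
    exact ⟨Nat.pos_of_dvd_of_pos hd.1 hm, Nat.le_of_dvd hm hd.1⟩
  calc m.divisors.card ≤ (Finset.Icc 1 m).card := Finset.card_le_card hsub
    _ = m := by rw [Nat.card_Icc]; omega

lemma tendsto_log_div_loglog : Filter.Tendsto
    (fun Q : ℝ => Real.log Q / Real.log (Real.log Q)) atTop atTop := by
  have h1 : Filter.Tendsto (fun x : ℝ => x / Real.log x) atTop atTop := by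
    have hev : ∀ᶠ x : ℝ in atTop, Real.sqrt x ≤ x / Real.log x := by
      have hlo := (isLittleO_log_rpow_atTop (show (0:ℝ) < 1/2 by norm_num)).def one_pos
      filter_upwards [hlo, eventually_ge_atTop (3:ℝ)] with x hx h3
      have hx0 : (0:ℝ) < x := by linarith
      have hlx0 : (0:ℝ) < Real.log x := Real.log_pos (by linarith)
      rw [Real.norm_eq_abs, Real.norm_eq_abs, abs_of_nonneg hlx0.le,
        abs_of_nonneg (Real.rpow_nonneg hx0.le _), one_mul] at hx
      rw [le_div_iff₀ hlx0]
      calc Real.sqrt x * Real.log x ≤ Real.sqrt x * x ^ ((1:ℝ)/2) :=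
            mul_le_mul_of_nonneg_left hx (Real.sqrt_nonneg x)
        _ = x := by
            rw [Real.sqrt_eq_rpow, ← Real.rpow_add hx0]
            norm_num
    have hs : Filter.Tendsto Real.sqrt atTop atTop := by
      refine (tendsto_rpow_atTop (by norm_num : (0:ℝ) < 1/2)).congr' ?_
      filter_upwards [eventually_ge_atTop (0:ℝ)] with x hx
      rw [Real.sqrt_eq_rpow]
    exact tendsto_atTop_mono' _ hev hs
  exact h1.comp Real.tendsto_log_atTop

theorem stmt_5 :
    ∀ ε : ℝ, 0 < ε → ∃ Q₀ : ℝ, ∀ Q : ℝ, Q₀ ≤ Q →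
      ∀ A : Finset ℕ, A.Nonempty → (∀ a ∈ A, 0 < a ∧ (a : ℝ) ≤ Q) →
        (((A ×ˢ A).image (fun p => (p.1 : ℚ) / (p.2 : ℚ))).card : ℝ) ≥
          (A.card : ℝ) ^ 2 *
            Real.exp ((-2 * Real.log 2 - ε) *
              (Real.log Q / Real.log (Real.log Q))) := by
  intro ε hε
  obtain ⟨N, hN⟩ := divisor_bound (ε/2) (by positivity)
  set M : ℕ := max N 16 with hM
  -- eventual conditions on Q
  have hev : ∀ᶠ Q : ℝ in atTop,
      Real.exp 1 ≤ Real.log Q ∧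
      (M:ℝ) ≤ Real.exp ((2 * Real.log 2 + ε) * (Real.log Q / Real.log (Real.log Q))) := by
    have t1 : ∀ᶠ Q : ℝ in atTop, Real.exp 1 ≤ Real.log Q :=
      Real.tendsto_log_atTop.eventually_ge_atTop _
    have t2 : ∀ᶠ Q : ℝ in atTop,
        (M:ℝ) ≤ Real.exp ((2 * Real.log 2 + ε) * (Real.log Q / Real.log (Real.log Q))) := by
      have hc : (0:ℝ) < 2 * Real.log 2 + ε := by
        have := Real.log_pos (show (1:ℝ) < 2 by norm_num); positivity
      have ht : Filter.Tendsto
          (fun Q : ℝ => Real.exp ((2 * Real.log 2 + ε) * (Real.log Q / Real.log (Real.log Q))))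
          atTop atTop :=
        Real.tendsto_exp_atTop.comp ((tendsto_log_div_loglog.const_mul_atTop hc))
      exact ht.eventually_ge_atTop _
    filter_upwards [t1, t2] with Q h1 h2 using ⟨h1, h2⟩
  obtain ⟨Q₀, hQ₀⟩ := Filter.eventually_atTop.mp hev
  refine ⟨max Q₀ 2, fun Q hQ A hAne hAQ => ?_⟩
  obtain ⟨hlogQ, hMD⟩ := hQ₀ Q (le_trans (le_max_left _ _) hQ)
  have hQ2 : (2:ℝ) ≤ Q := le_trans (le_max_right _ _) hQ
  have hlQ0 : (0:ℝ) < Real.log Q := lt_of_lt_of_le (Real.exp_pos 1) hlogQ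
  have hQ1 : (1:ℝ) < Q := by linarith
  have hQ0 : (0:ℝ) < Q := by linarith
  have hllQ : (1:ℝ) ≤ Real.log (Real.log Q) := by
    calc (1:ℝ) = Real.log (Real.exp 1) := (Real.log_exp 1).symm
      _ ≤ Real.log (Real.log Q) := Real.log_le_log (Real.exp_pos 1) hlogQ
  have hllQ0 : (0:ℝ) < Real.log (Real.log Q) := by linarith
  -- the divisor count bound D
  set D : ℝ := Real.exp ((2 * Real.log 2 + ε) * (Real.log Q / Real.log (Real.log Q))) with hD
  have hDpos : (0:ℝ) < D := Real.exp_pos _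
  have hApos : ∀ a ∈ A, 0 < a := fun a ha => (hAQ a ha).1
  have hkey : (A.card : ℝ) ^ 2 ≤
      (((A ×ˢ A).image (fun p : ℕ × ℕ => (p.1 : ℚ) / (p.2 : ℚ))).card : ℝ) * D := by
    apply comb A hApos D
    intro m hm
    rw [Finset.mem_image] at hm
    obtain ⟨p, hp, rfl⟩ := hm
    rw [Finset.mem_product] at hp
    have h1 : 0 < p.1 := (hAQ p.1 hp.1).1
    have h2 : 0 < p.2 := (hAQ p.2 hp.2).1
    have hle1 : (p.1 : ℝ) ≤ Q := (hAQ p.1 hp.1).2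
    have hle2 : (p.2 : ℝ) ≤ Q := (hAQ p.2 hp.2).2
    set m := p.1 * p.2 with hmm
    have hm0 : 0 < m := Nat.mul_pos h1 h2
    have hmQ : (m : ℝ) ≤ Q ^ 2 := by
      have h' : ((p.1 * p.2 : ℕ) : ℝ) ≤ Q * Q := by
        push_cast
        exact mul_le_mul hle1 hle2 (by positivity) (by positivity)
      calc (m:ℝ) = ((p.1 * p.2 : ℕ) : ℝ) := by rw [hmm]
        _ ≤ Q * Q := h'
        _ = Q ^ 2 := by ring
    rcases lt_or_ge m M with hsmall | hbig
    · -- small m : divisors.card ≤ m ≤ M ≤ D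
      calc (m.divisors.card : ℝ) ≤ (m : ℝ) := by
            exact_mod_cast card_div_le_self m hm0
        _ ≤ (M : ℝ) := by exact_mod_cast hsmall.le
        _ ≤ D := hMD
    · -- large m : use the divisor bound and monotonicity of x / log x
      have hmN : N ≤ m := le_trans (le_max_left _ _) hbig
      have hm16 : (16:ℕ) ≤ m := le_trans (le_max_right _ _) hbig
      have hlm : Real.exp 1 ≤ Real.log m := by
        have h16 : (16:ℝ) ≤ (m:ℝ) := by exact_mod_cast hm16
        have hl2 : (0.6931471803:ℝ) < Real.log 2 := Real.log_two_gt_d9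
        have : Real.log 16 ≤ Real.log m := Real.log_le_log (by norm_num) h16
        have h16' : Real.log 16 = 4 * Real.log 2 := by
          rw [show (16:ℝ) = 2 ^ (4:ℕ) by norm_num, Real.log_pow]
          push_cast; ring
        have he : Real.exp 1 < 2.7182818286 := Real.exp_one_lt_d9
        nlinarith
      have hlm0 : (0:ℝ) < Real.log m := lt_of_lt_of_le (Real.exp_pos 1) hlm
      have hllm : (1:ℝ) ≤ Real.log (Real.log m) := by
        calc (1:ℝ) = Real.log (Real.exp 1) := (Real.log_exp 1).symm
          _ ≤ Real.log (Real.log m) := Real.log_le_log (Real.exp_pos 1) hlm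
      have hllm0 : (0:ℝ) < Real.log (Real.log m) := by linarith
      -- log m / log log m ≤ 2 log Q / log log Q
      have hmono : Real.log m / Real.log (Real.log m)
          ≤ 2 * Real.log Q / Real.log (Real.log Q) := by
        set u := Real.log m with hu
        set v := 2 * Real.log Q with hv
        have huv : u ≤ v := by
          calc u ≤ Real.log (Q^2) := Real.log_le_log (by exact_mod_cast hm0) hmQ
            _ = v := by rw [Real.log_pow]; push_cast; ring
        have hvmem : Real.exp 1 ≤ v := by
          calc Real.exp 1 ≤ u := hlm
            _ ≤ v := huv
        have hanti := Real.log_div_self_antitoneOn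
          (Set.mem_setOf_eq ▸ hlm) (Set.mem_setOf_eq ▸ hvmem) huv
        -- hanti : log v / v ≤ log u / u
        have hv0 : (0:ℝ) < v := by linarith
        have hlv0 : (0:ℝ) < Real.log v := by
          have : (1:ℝ) ≤ Real.log v := by
            calc (1:ℝ) = Real.log (Real.exp 1) := (Real.log_exp 1).symm
              _ ≤ Real.log v := Real.log_le_log (Real.exp_pos 1) hvmem
          linarith
        have h1 : u / Real.log u ≤ v / Real.log v := by
          rw [div_le_div_iff₀ hllm0 hlv0]
          have := (div_le_div_iff₀ hv0 (by positivity : (0:ℝ) < u)).mp hanti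
          -- this : log v * u ≤ log u * v
          nlinarith [this]
        have h2 : v / Real.log v ≤ v / Real.log (Real.log Q) := by
          apply div_le_div_of_nonneg_left hv0.le hllQ0
          rw [hv]
          apply Real.log_le_log hlQ0
          linarith
        calc u / Real.log u = u / Real.log (Real.log m) := by rw [hu]
          _ ≤ v / Real.log v := h1
          _ ≤ v / Real.log (Real.log Q) := h2
          _ = 2 * Real.log Q / Real.log (Real.log Q) := by rw [hv]
      calc (m.divisors.card : ℝ)
          ≤ Real.exp ((Real.log 2 + ε/2) * (Real.log m / Real.log (Real.log m))) := hN m hmN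
        _ ≤ D := by
            rw [hD]
            apply Real.exp_le_exp.mpr
            have hc0 : (0:ℝ) ≤ Real.log 2 + ε/2 := by
              have := Real.log_pos (show (1:ℝ) < 2 by norm_num); positivity
            calc (Real.log 2 + ε/2) * (Real.log m / Real.log (Real.log m))
                ≤ (Real.log 2 + ε/2) * (2 * Real.log Q / Real.log (Real.log Q)) :=
                  mul_le_mul_of_nonneg_left hmono hc0
              _ = (2 * Real.log 2 + ε) * (Real.log Q / Real.log (Real.log Q)) := by ring
  -- conclude
  have hfin : (A.card : ℝ) ^ 2 *
      Real.exp ((-2 * Real.log 2 - ε) * (Real.log Q / Real.log (Real.log Q)))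
      ≤ (((A ×ˢ A).image (fun p : ℕ × ℕ => (p.1 : ℚ) / (p.2 : ℚ))).card : ℝ) := by
    have hexp : Real.exp ((-2 * Real.log 2 - ε) * (Real.log Q / Real.log (Real.log Q)))
        = D⁻¹ := by
      rw [hD, ← Real.exp_neg]
      congr 1
      ring
    rw [hexp, ← div_eq_mul_inv, div_le_iff₀ hDpos]
    exact hkey
  exact hfin

end QuotientSetAux
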